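/- Let K be a field, a, b positive integers, g = gcd(a,b), and let A be a set with {0,g} ⊆ A ⊆ {0,1,…,g}. Let d = gcd(A), let I = I_A, J = (x^a, y^b), and set m = g/d − |A| + 2 (note m ≥ 1 since every element of A is a multiple of d). Then I^{m+1} = J·I^m; in other words, the reduction number of I with respect to J is at most g/gcd(A) − |A| + 2. -/

import Mathlib

open MvPolynomial Pointwise

/-- The monomial `x^c y^d` in `K[x,y]`. -/
noncomputable def mono (K : Type*) [Field K] (c d : ℕ) : MvPolynomial (Fin 2) K :=
  X 0 ^ c * X 1 ^ d

/-- The ideal `J = (x^a, y^b)`. -/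
noncomputable def Jab (K : Type*) [Field K] (a b : ℕ) : Ideal (MvPolynomial (Fin 2) K) :=
  Ideal.span {mono K a 0, mono K 0 b}

/-- For `A ⊆ {0,…,g}` with `g = gcd(a,b)`, the ideal `I_A` generated by the
monomials `x^(i·(a/g)) y^(b − i·(b/g))` for `i ∈ A`. -/
noncomputable def IA (K : Type*) [Field K] (a b : ℕ) (A : Finset ℕ) :
    Ideal (MvPolynomial (Fin 2) K) :=
  Ideal.span ((fun i : ℕ =>
    mono K (i * (a / Nat.gcd a b)) (b - i * (b / Nat.gcd a b))) '' (A : Set ℕ))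

lemma combi (A : Finset ℕ) (g : ℕ) (hg : 0 < g) (h0A : (0:ℕ) ∈ A) (hgA : g ∈ A)
    (hbound : ∀ x ∈ A, x ≤ g) (T : Multiset ℕ) (hT : ∀ x ∈ T, x ∈ A)
    (hcard : g / A.gcd id + 3 ≤ T.card + A.card) :
    ∃ (R : Multiset ℕ) (ε : ℕ), (∀ x ∈ R, x ∈ A) ∧ R.card + 1 = T.card ∧
      (ε = 0 ∨ ε = g) ∧ R.sum + ε = T.sum := by
  by_cases h0T : (0:ℕ) ∈ T
  · refine ⟨T.erase 0, 0, fun x hx => hT x (Multiset.mem_of_mem_erase hx), ?_, Or.inl rfl, ?_⟩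
    · rw [Multiset.card_erase_of_mem h0T, Nat.pred_eq_sub_one]
      have : 0 < T.card := Multiset.card_pos_iff_exists_mem.mpr ⟨0, h0T⟩
      omega
    · have h := Multiset.cons_erase h0T
      calc (T.erase 0).sum + 0 = ((0 : ℕ) ::ₘ T.erase 0).sum := by
            rw [Multiset.sum_cons]; omega
        _ = T.sum := by rw [h]
  by_cases hgT : g ∈ T
  · refine ⟨T.erase g, g, fun x hx => hT x (Multiset.mem_of_mem_erase hx), ?_, Or.inr rfl, ?_⟩
    · rw [Multiset.card_erase_of_mem hgT, Nat.pred_eq_sub_one]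
      have : 0 < T.card := Multiset.card_pos_iff_exists_mem.mpr ⟨g, hgT⟩
      omega
    · have h := Multiset.cons_erase hgT
      calc (T.erase g).sum + g = (g ::ₘ T.erase g).sum := by rw [Multiset.sum_cons]; omega
        _ = T.sum := by rw [h]
  by_contra hC
  push_neg at hC
  have hne : ∀ x ∈ T, 1 ≤ x ∧ x < g := by
    intro x hx
    have hxA := hT x hx
    have h1 : x ≤ g := hbound x hxA
    have h2 : x ≠ 0 := fun h => h0T (h ▸ hx)
    have h3 : x ≠ g := fun h => hgT (h ▸ hx)
    omega
  -- the replacement lemma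
  have L1 : ∀ T₀ : Multiset ℕ, T₀ ≤ T → ∀ R₀ : Multiset ℕ, (∀ x ∈ R₀, x ∈ A) →
      R₀.card + 1 ≤ T₀.card → (R₀.sum = T₀.sum ∨ R₀.sum + g = T₀.sum) → False := by
    intro T₀ hle R₀ hR₀A hcardR hsum
    have hcard₀ : T₀.card ≤ T.card := Multiset.card_le_card hle
    have hTsplit : (T - T₀) + T₀ = T := tsub_add_cancel_of_le hle
    have hTsum : (T - T₀).sum + T₀.sum = T.sum := by
      rw [← Multiset.sum_add, hTsplit]
    have hTcard : (T - T₀).card + T₀.card = T.card := by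
      rw [← Multiset.card_add, hTsplit]
    set R : Multiset ℕ :=
      (T - T₀) + R₀ + Multiset.replicate (T.card - 1 - ((T - T₀).card + R₀.card)) 0 with hR
    have hRmem : ∀ x ∈ R, x ∈ A := by
      intro x hx
      rw [hR] at hx
      simp only [Multiset.mem_add] at hx
      rcases hx with (hx | hx) | hx
      · exact hT x (Multiset.mem_of_le (Multiset.sub_le_self T T₀) hx)
      · exact hR₀A x hx
      · rw [Multiset.eq_of_mem_replicate hx]; exact h0A
    have hRcard : R.card + 1 = T.card := by
      rw [hR]
      simp only [Multiset.card_add, Multiset.card_replicate]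
      omega
    have hRsum : R.sum = (T - T₀).sum + R₀.sum := by
      rw [hR]
      simp [Multiset.sum_replicate]
    rcases hsum with h | h
    · exact hC R 0 hRmem hRcard (Or.inl rfl) (by omega)
    · exact hC R g hRmem hRcard (Or.inr rfl) (by omega)
  -- no sub-multiset sums to 0 mod g
  have Q : ∀ T₀ : Multiset ℕ, T₀ ≤ T → 0 < T₀.card → T₀.sum % g = 0 → False := by
    intro T₀ hle hpos hmod
    have hmemT₀ : ∀ x ∈ T₀, 1 ≤ x ∧ x < g := fun x hx => hne x (Multiset.mem_of_le hle hx)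
    have h1 : T₀.card ≤ T₀.sum := by
      have := Multiset.card_nsmul_le_sum (s := T₀) (a := 1) (fun x hx => (hmemT₀ x hx).1)
      simpa using this
    have h2 : T₀.sum ≤ T₀.card * (g - 1) := by
      have := Multiset.sum_le_card_nsmul T₀ (g - 1) (fun x hx => by have := hmemT₀ x hx; omega)
      simpa using this
    have hdvd : g ∣ T₀.sum := Nat.dvd_of_mod_eq_zero hmod
    obtain ⟨c, hc⟩ := hdvd
    have hcomm : g * c = c * g := Nat.mul_comm g c
    have hg1 : g - 1 + 1 = g := by omega
    have h2' : T₀.sum + T₀.card ≤ T₀.card * g := by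
      calc T₀.sum + T₀.card ≤ T₀.card * (g - 1) + T₀.card := by omega
        _ = T₀.card * (g - 1 + 1) := by ring
        _ = T₀.card * g := by rw [hg1]
    have hclt : c < T₀.card := by
      by_contra hcl
      push_neg at hcl
      have hmul : T₀.card * g ≤ c * g := Nat.mul_le_mul_right g hcl
      omega
    have hc1 : 1 ≤ c := by
      rcases Nat.eq_zero_or_pos c with h | h
      · subst h; omega
      · exact h
    refine L1 T₀ hle (Multiset.replicate c g) (fun x hx => by
        rw [Multiset.eq_of_mem_replicate hx]; exact hgA) ?_ (Or.inl ?_)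
    · rw [Multiset.card_replicate]; omega
    · rw [Multiset.sum_replicate, smul_eq_mul, hc]; ring
  -- sub-multisets of size ≥ 2 avoid residues of A \ {g}
  have Q2 : ∀ T₀ : Multiset ℕ, T₀ ≤ T → 2 ≤ T₀.card → T₀.sum % g ∉ A.erase g := by
    intro T₀ hle h2c hmem
    have ha : T₀.sum % g ∈ A := Finset.mem_of_mem_erase hmem
    have hag : T₀.sum % g ≠ g := Finset.ne_of_mem_erase hmem
    set t := T₀.card with ht
    set σ := T₀.sum with hσ
    set av := σ % g with hav
    by_cases h0 : av = 0
    · exact Q T₀ hle (by omega) h0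
    have hmemT₀ : ∀ x ∈ T₀, 1 ≤ x ∧ x < g := fun x hx => hne x (Multiset.mem_of_le hle hx)
    have h2 : σ ≤ t * (g - 1) := by
      have := Multiset.sum_le_card_nsmul T₀ (g - 1) (fun x hx => by have := hmemT₀ x hx; omega)
      simpa using this
    have hg1 : g - 1 + 1 = g := by omega
    have h2' : σ + t ≤ t * g := by
      calc σ + t ≤ t * (g - 1) + t := by omega
        _ = t * (g - 1 + 1) := by ring
        _ = t * g := by rw [hg1]
    have hdm : g * (σ / g) + av = σ := Nat.div_add_mod σ g
    set c := σ / g with hcdef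
    have hcomm : g * c = c * g := Nat.mul_comm g c
    have havg : av < g := Nat.mod_lt _ hg
    have hclt : c < t := by
      by_contra hcl
      push_neg at hcl
      have hmul : t * g ≤ c * g := Nat.mul_le_mul_right g hcl
      omega
    by_cases hcase : c + 2 ≤ t
    · refine L1 T₀ hle (av ::ₘ Multiset.replicate c g) ?_ ?_ (Or.inl ?_)
      · intro x hx
        rcases Multiset.mem_cons.mp hx with h | h
        · rwa [h]
        · rw [Multiset.eq_of_mem_replicate h]; exact hgA
      · rw [Multiset.card_cons, Multiset.card_replicate]; omega
      · rw [Multiset.sum_cons, Multiset.sum_replicate, smul_eq_mul]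
        omega
    · -- c + 1 = t, c ≥ 1
      have hc1 : c + 1 = t := by omega
      have hcpos : 1 ≤ c := by omega
      refine L1 T₀ hle (av ::ₘ Multiset.replicate (c - 1) g) ?_ ?_ (Or.inr ?_)
      · intro x hx
        rcases Multiset.mem_cons.mp hx with h | h
        · rwa [h]
        · rw [Multiset.eq_of_mem_replicate h]; exact hgA
      · rw [Multiset.card_cons, Multiset.card_replicate]; omega
      · rw [Multiset.sum_cons, Multiset.sum_replicate, smul_eq_mul]
        have hstep : (c - 1) * g + g = c * g := by
          have h : c - 1 + 1 = c := by omega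
          calc (c - 1) * g + g = ((c - 1) + 1) * g := by ring
            _ = c * g := by rw [h]
        omega
  -- pigeonhole on prefix sums
  set d := A.gcd id with hd
  have hdg : d ∣ g := by exact Finset.gcd_dvd hgA
  have hdpos : 0 < d := by
    rcases Nat.eq_zero_or_pos d with h | h
    · rw [h] at hdg; omega
    · exact h
  set L := T.toList with hL
  have hLT : (L : Multiset ℕ) = T := Multiset.coe_toList T
  have hLlen : L.length = T.card := by rw [← hLT]; rfl
  set p : ℕ → ℕ := fun j => (L.take j).sum % g with hp
  set M : Finset ℕ := (Finset.range (g / d)).image (· * d) with hM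
  have hMcard : M.card = g / d := by
    rw [hM]
    rw [Finset.card_image_of_injective _ (fun x y h => Nat.eq_of_mul_eq_mul_right hdpos h)]
    exact Finset.card_range _
  have hmemM : ∀ x : ℕ, x < g → d ∣ x → x ∈ M := by
    intro x hxg hxd
    rw [hM, Finset.mem_image]
    refine ⟨x / d, Finset.mem_range.mpr ?_, Nat.div_mul_cancel hxd⟩
    exact Nat.div_lt_div_of_lt_of_dvd hdg hxg
  have hAM : A.erase g ⊆ M := by
    intro x hx
    have hxA := Finset.mem_of_mem_erase hx
    have hxg : x < g := by
      have := hbound x hxA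
      have := Finset.ne_of_mem_erase hx
      omega
    exact hmemM x hxg (by exact Finset.gcd_dvd hxA)
  -- prefix multisets
  have hpre : ∀ j, j ≤ T.card → ((L.take j : List ℕ) : Multiset ℕ) ≤ T ∧
      ((L.take j : List ℕ) : Multiset ℕ).card = j := by
    intro j hj
    constructor
    · rw [← hLT]
      exact (L.take_sublist j).subperm
    · simp [List.length_take]; omega
  have hmaps : ∀ j ∈ Finset.Icc 2 T.card, p j ∈ M \ A.erase g := by
    intro j hj
    rw [Finset.mem_Icc] at hj
    obtain ⟨hle, hcardj⟩ := hpre j hj.2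
    have hsum : ((L.take j : List ℕ) : Multiset ℕ).sum = (L.take j).sum := by
      simp
    rw [Finset.mem_sdiff]
    constructor
    · apply hmemM
      · exact Nat.mod_lt _ hg
      · rw [Nat.dvd_mod_iff hdg]
        apply List.dvd_sum
        intro x hx
        have : x ∈ T := Multiset.mem_of_le hle (by simpa using hx)
        exact Finset.gcd_dvd (hT x this)
    · have := Q2 _ hle (by omega)
      rw [hsum] at this
      exact this
  have hinj : Set.InjOn p (Finset.Icc 2 T.card) := by
    have key : ∀ j j' : ℕ, j ∈ Finset.Icc 2 T.card → j' ∈ Finset.Icc 2 T.card →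
        j < j' → p j ≠ p j' := by
      intro j j' hj hj' hlt
      rw [Finset.mem_Icc] at hj hj'
      intro heq
      set B : Multiset ℕ := (((L.drop j).take (j' - j) : List ℕ) : Multiset ℕ) with hB
      have hBle : B ≤ T := by
        rw [hB, ← hLT]
        exact (((L.drop j).take_sublist (j' - j)).trans (L.drop_sublist j)).subperm
      have hBcard : B.card = j' - j := by
        rw [hB]
        simp [List.length_take, List.length_drop]
        omega
      have hsplit : (L.take j').sum = (L.take j).sum + B.sum := by
        have : j + (j' - j) = j' := by omega
        rw [← this, List.take_add, List.sum_append]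
        simp [hB]
      have hdvdB : B.sum % g = 0 := by
        have h1 : (L.take j).sum % g = (L.take j').sum % g := heq
        rw [hsplit] at h1
        have h' : (L.take j).sum + B.sum ≡ (L.take j).sum + 0 [MOD g] := by
          show ((L.take j).sum + B.sum) % g = ((L.take j).sum + 0) % g
          rw [Nat.add_zero]
          exact h1.symm
        have h'' : B.sum ≡ 0 [MOD g] := Nat.ModEq.add_left_cancel' _ h'
        simpa [Nat.ModEq] using h''
      exact Q B hBle (by omega) hdvdB
    intro j hj j' hj' heq
    simp only [Finset.coe_Icc, Set.mem_Icc] at hj hj'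
    rcases lt_trichotomy j j' with h | h | h
    · exact absurd heq (key j j' (Finset.mem_Icc.mpr hj) (Finset.mem_Icc.mpr hj') h)
    · exact h
    · exact absurd heq.symm (key j' j (Finset.mem_Icc.mpr hj') (Finset.mem_Icc.mpr hj) h)
  have hcardle : (Finset.Icc 2 T.card).card ≤ (M \ A.erase g).card :=
    Finset.card_le_card_of_injOn p hmaps hinj
  have h1 : (Finset.Icc 2 T.card).card = T.card - 1 := by
    rw [Nat.card_Icc]
    have : 2 ≤ T.card := by
      have := Finset.card_le_card hAM
      rw [Finset.card_erase_of_mem hgA, hMcard] at this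
      omega
    omega
  have h2 : (M \ A.erase g).card = M.card - (A.erase g).card := Finset.card_sdiff_of_subset hAM
  have h3 : (A.erase g).card = A.card - 1 := Finset.card_erase_of_mem hgA
  have h4 : (A.erase g).card ≤ M.card := Finset.card_le_card hAM
  have h5 : 1 ≤ A.card := Finset.card_pos.mpr ⟨g, hgA⟩
  rw [hMcard] at h2 h4
  omega

lemma mono_mul (K : Type*) [Field K] (c d c' d' : ℕ) :
    mono K c d * mono K c' d' = mono K (c + c') (d + d') := by
  simp only [mono]; ring

lemma exp_bound (b β g : ℕ) (hgb : g * β = b) (S : Multiset ℕ) (hS : ∀ i ∈ S, i ≤ g) :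
    S.sum * β ≤ S.card * b ∧ (S.map (fun i => b - i * β)).sum + S.sum * β = S.card * b := by
  induction S using Multiset.induction_on with
  | empty => simp
  | cons i S ih =>
    have hi : i ≤ g := hS i (Multiset.mem_cons_self i S)
    have hiβ : i * β ≤ b := by
      calc i * β ≤ g * β := Nat.mul_le_mul_right β hi
        _ = b := hgb
    obtain ⟨h1, h2⟩ := ih (fun x hx => hS x (Multiset.mem_cons_of_mem hx))
    have hadd : (i + S.sum) * β = i * β + S.sum * β := by ring
    have hsucc : (S.card + 1) * b = S.card * b + b := by ring
    constructor
    · rw [Multiset.sum_cons, Multiset.card_cons, hadd, hsucc]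
      omega
    · rw [Multiset.map_cons, Multiset.sum_cons, Multiset.card_cons, Multiset.sum_cons,
        hadd, hsucc]
      omega

lemma mem_pow_gens (K : Type*) [Field K] (α β b : ℕ) (A : Finset ℕ) (n : ℕ)
    (z : MvPolynomial (Fin 2) K)
    (hz : z ∈ ((fun i : ℕ => mono K (i * α) (b - i * β)) '' (A : Set ℕ)) ^ n) :
    ∃ S : Multiset ℕ, S.card = n ∧ (∀ i ∈ S, i ∈ A) ∧
      z = mono K (S.sum * α) ((S.map (fun i => b - i * β)).sum) := by
  induction n generalizing z with
  | zero =>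
    rw [pow_zero] at hz
    refine ⟨0, by simp, by simp, ?_⟩
    rw [Set.mem_one] at hz
    simp [hz, mono]
  | succ n ih =>
    rw [pow_succ] at hz
    rw [Set.mem_mul] at hz
    obtain ⟨u, hu, v, hv, rfl⟩ := hz
    obtain ⟨S, hScard, hSA, rfl⟩ := ih u hu
    obtain ⟨i, hiA, rfl⟩ := hv
    refine ⟨i ::ₘ S, by simp [hScard], ?_, ?_⟩
    · intro x hx
      rcases Multiset.mem_cons.mp hx with h | h
      · exact h ▸ hiA
      · exact hSA x h
    · rw [mono_mul]
      congr 1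
      · rw [Multiset.sum_cons]; ring
      · rw [Multiset.map_cons, Multiset.sum_cons]; omega

lemma prod_mem_pow (K : Type*) [Field K] (α β b : ℕ) (A : Finset ℕ)
    (S : Multiset ℕ) (hS : ∀ i ∈ S, i ∈ A) :
    mono K (S.sum * α) ((S.map (fun i => b - i * β)).sum) ∈
      Ideal.span ((fun i : ℕ => mono K (i * α) (b - i * β)) '' (A : Set ℕ)) ^ S.card := by
  induction S using Multiset.induction_on with
  | empty => simp [mono]
  | cons i S ih =>
    have hiA : i ∈ A := hS i (Multiset.mem_cons_self i S)
    have hmem := ih (fun x hx => hS x (Multiset.mem_cons_of_mem hx))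
    have heq : mono K ((i ::ₘ S).sum * α) (((i ::ₘ S).map (fun i => b - i * β)).sum)
        = mono K (i * α) (b - i * β) *
          mono K (S.sum * α) ((S.map (fun i => b - i * β)).sum) := by
      rw [mono_mul]
      congr 1
      · rw [Multiset.sum_cons]; ring
      · rw [Multiset.map_cons, Multiset.sum_cons]
    rw [Multiset.card_cons, heq, pow_succ']
    exact Ideal.mul_mem_mul (Ideal.subset_span ⟨i, hiA, rfl⟩) hmem


theorem stmt2 (K : Type*) [Field K] (a b : ℕ) (ha : 0 < a) (hb : 0 < b)
    (A : Finset ℕ) (hA1 : ({0, Nat.gcd a b} : Finset ℕ) ⊆ A)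
    (hA2 : A ⊆ Finset.range (Nat.gcd a b + 1)) :
    IA K a b A ^ (Nat.gcd a b / A.gcd id + 2 - A.card + 1)
      = Jab K a b * IA K a b A ^ (Nat.gcd a b / A.gcd id + 2 - A.card) := by
  have hgpos : 0 < Nat.gcd a b := Nat.gcd_pos_of_pos_left b ha
  have hga : Nat.gcd a b * (a / Nat.gcd a b) = a := Nat.mul_div_cancel' (Nat.gcd_dvd_left a b)
  have hgb : Nat.gcd a b * (b / Nat.gcd a b) = b := Nat.mul_div_cancel' (Nat.gcd_dvd_right a b)
  have h0A : (0:ℕ) ∈ A := hA1 (by simp)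
  have hgA : Nat.gcd a b ∈ A := hA1 (by simp)
  have hbound : ∀ x ∈ A, x ≤ Nat.gcd a b := fun x hx => by
    have := Finset.mem_range.mp (hA2 hx); omega
  have hIA : IA K a b A = Ideal.span ((fun i : ℕ =>
      mono K (i * (a / Nat.gcd a b)) (b - i * (b / Nat.gcd a b))) '' (A : Set ℕ)) := rfl
  rw [hIA]
  apply le_antisymm
  · have hsp : Ideal.span ((fun i : ℕ =>
        mono K (i * (a / Nat.gcd a b)) (b - i * (b / Nat.gcd a b))) '' (A : Set ℕ))
          ^ (Nat.gcd a b / A.gcd id + 2 - A.card + 1)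
        = Ideal.span (((fun i : ℕ =>
        mono K (i * (a / Nat.gcd a b)) (b - i * (b / Nat.gcd a b))) '' (A : Set ℕ))
          ^ (Nat.gcd a b / A.gcd id + 2 - A.card + 1)) := Submodule.span_pow _ _
    rw [hsp, Ideal.span_le]
    intro z hz
    obtain ⟨S, hScard, hSA, rfl⟩ :=
      mem_pow_gens K (a / Nat.gcd a b) (b / Nat.gcd a b) b A _ z hz
    obtain ⟨R, ε, hRA, hRcard, hε, hRsum⟩ :=
      combi A (Nat.gcd a b) hgpos h0A hgA hbound S hSA (by omega)
    have hRcard' : R.card = Nat.gcd a b / A.gcd id + 2 - A.card := by omega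
    have hSle : ∀ i ∈ S, i ≤ Nat.gcd a b := fun i hi => hbound i (hSA i hi)
    have hRle : ∀ i ∈ R, i ≤ Nat.gcd a b := fun i hi => hbound i (hRA i hi)
    obtain ⟨hS1, hS2⟩ := exp_bound b (b / Nat.gcd a b) (Nat.gcd a b) hgb S hSle
    obtain ⟨hR1, hR2⟩ := exp_bound b (b / Nat.gcd a b) (Nat.gcd a b) hgb R hRle
    have hεβ : ε * (b / Nat.gcd a b) ≤ b := by
      rcases hε with h | h
      · simp [h]
      · rw [h]
        exact le_of_eq hgb
    have hsumβ : S.sum * (b / Nat.gcd a b) = R.sum * (b / Nat.gcd a b) + ε * (b / Nat.gcd a b) := by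
      rw [← hRsum]; ring
    have hkey : mono K (S.sum * (a / Nat.gcd a b)) ((S.map (fun i => b - i * (b / Nat.gcd a b))).sum)
        = mono K (ε * (a / Nat.gcd a b)) (b - ε * (b / Nat.gcd a b)) *
          mono K (R.sum * (a / Nat.gcd a b)) ((R.map (fun i => b - i * (b / Nat.gcd a b))).sum) := by
      rw [mono_mul]
      congr 1
      · have h : S.sum = ε + R.sum := by omega
        rw [h]; ring
      · have hbw : (b - ε * (b / Nat.gcd a b)) + ε * (b / Nat.gcd a b) = b :=
          Nat.sub_add_cancel hεβ
        rw [hScard] at hS2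
        rw [hRcard'] at hR2
        have h1 : (Nat.gcd a b / A.gcd id + 2 - A.card + 1) * b
            = (Nat.gcd a b / A.gcd id + 2 - A.card) * b + b := by ring
        omega
    rw [hkey]
    refine Ideal.mul_mem_mul ?_ ?_
    · rcases hε with h | h
      · subst h
        have he : mono K (0 * (a / Nat.gcd a b)) (b - 0 * (b / Nat.gcd a b)) = mono K 0 b := by
          norm_num
        rw [he]
        exact Ideal.subset_span (by simp [Jab])
      · subst h
        have he : mono K (Nat.gcd a b * (a / Nat.gcd a b)) (b - Nat.gcd a b * (b / Nat.gcd a b))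
            = mono K a 0 := by rw [hga, hgb]; norm_num
        rw [he]
        exact Ideal.subset_span (by simp [Jab])
    · have := prod_mem_pow K (a / Nat.gcd a b) (b / Nat.gcd a b) b A R hRA
      rwa [hRcard'] at this
  · have hJI : Jab K a b ≤ Ideal.span ((fun i : ℕ =>
        mono K (i * (a / Nat.gcd a b)) (b - i * (b / Nat.gcd a b))) '' (A : Set ℕ)) := by
      rw [Jab, Ideal.span_le]
      intro z hz
      rcases Set.mem_insert_iff.mp hz with h | h
      · subst h
        apply Ideal.subset_span
        refine ⟨Nat.gcd a b, by exact_mod_cast hgA, ?_⟩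
        show mono K (Nat.gcd a b * (a / Nat.gcd a b)) (b - Nat.gcd a b * (b / Nat.gcd a b))
          = mono K a 0
        rw [hga, hgb]; norm_num
      · rw [Set.mem_singleton_iff] at h
        subst h
        apply Ideal.subset_span
        refine ⟨0, by exact_mod_cast h0A, ?_⟩
        norm_num
    calc Jab K a b * Ideal.span ((fun i : ℕ =>
          mono K (i * (a / Nat.gcd a b)) (b - i * (b / Nat.gcd a b))) '' (A : Set ℕ))
            ^ (Nat.gcd a b / A.gcd id + 2 - A.card)
        ≤ Ideal.span ((fun i : ℕ =>
          mono K (i * (a / Nat.gcd a b)) (b - i * (b / Nat.gcd a b))) '' (A : Set ℕ)) *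
          Ideal.span ((fun i : ℕ =>
          mono K (i * (a / Nat.gcd a b)) (b - i * (b / Nat.gcd a b))) '' (A : Set ℕ))
            ^ (Nat.gcd a b / A.gcd id + 2 - A.card) := Ideal.mul_mono_left hJI
      _ = _ := (pow_succ' _ _).symm
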